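/- Let W(μ₀)ᵀ = (Σ⁻¹μᵀ, Σ⁻¹𝟙ᵀ) M⁻¹ (μ₀, 1)ᵀ denote the efficient portfolio with target return μ₀ (Σ symmetric positive definite, M the 2×2 Gram matrix of μ, 𝟙 in the Σ⁻¹ inner product, μ not proportional to 𝟙). If w_1,…,w_m ∈ ℝ satisfy ∑_{i=1}^m w_i = 1 and μ₀₁,…,μ₀ₘ are real numbers, then ∑_{i=1}^m w_i W(μ₀ᵢ) = W(∑_{i=1}^m w_i μ₀ᵢ); i.e., an affine combination of efficient portfolios is the efficient portfolio for the corresponding affine combination of target returns. -/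
import Mathlib


open Matrix

/-- Mutual fund separation: an affine combination of efficient portfolios is
the efficient portfolio of the corresponding affine combination of target
returns. -/
theorem mutual_fund_separation {n : ℕ}
    (S : Matrix (Fin n) (Fin n) ℝ)
    (hsymm : Sᵀ = S)
    (hpos : ∀ W : Fin n → ℝ, W ≠ 0 → 0 < W ⬝ᵥ S *ᵥ W)
    (m : Fin n → ℝ)
    (hm : ¬ ∃ c : ℝ, m = c • (fun _ : Fin n => (1 : ℝ)))
    (k : ℕ) (w : Fin k → ℝ) (hw : ∑ i, w i = 1) (t : Fin k → ℝ) :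
    let one : Fin n → ℝ := fun _ => 1
    let M : Matrix (Fin 2) (Fin 2) ℝ :=
      !![m ⬝ᵥ S⁻¹ *ᵥ m, m ⬝ᵥ S⁻¹ *ᵥ one; one ⬝ᵥ S⁻¹ *ᵥ m, one ⬝ᵥ S⁻¹ *ᵥ one]
    let Wfun : ℝ → Fin n → ℝ := fun μ₀ =>
      (M⁻¹ *ᵥ ![μ₀, 1]) 0 • (S⁻¹ *ᵥ m) + (M⁻¹ *ᵥ ![μ₀, 1]) 1 • (S⁻¹ *ᵥ one)
    ∑ i, w i • Wfun (t i) = Wfun (∑ i, w i * t i) := by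
  intro one M Wfun
  funext x
  have key : ∀ j : Fin 2, ∀ μ₀ : ℝ, (M⁻¹ *ᵥ ![μ₀, 1]) j = M⁻¹ j 0 * μ₀ + M⁻¹ j 1 := by
    intro j μ₀
    simp [mulVec, dotProduct, Fin.sum_univ_two]
  simp only [Wfun, key, Finset.sum_apply, Pi.add_apply, Pi.smul_apply, smul_eq_mul]
  have h1 : ∑ i, w i * ((M⁻¹ 0 0 * t i + M⁻¹ 0 1) * (S⁻¹ *ᵥ m) x
      + (M⁻¹ 1 0 * t i + M⁻¹ 1 1) * (S⁻¹ *ᵥ one) x)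
    = (M⁻¹ 0 0 * (∑ i, w i * t i) + M⁻¹ 0 1 * (∑ i, w i)) * (S⁻¹ *ᵥ m) x
      + (M⁻¹ 1 0 * (∑ i, w i * t i) + M⁻¹ 1 1 * (∑ i, w i)) * (S⁻¹ *ᵥ one) x := by
    simp only [Finset.mul_sum, Finset.sum_mul, add_mul, ← Finset.sum_add_distrib]
    apply Finset.sum_congr rfl
    intro i _
    ring
  rw [h1, hw]
  ring
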